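/- The centered area of a hyperbolic regular n-gon with side length a equals (na/2)·tanh(a/2)·cot(π/n). Equivalently, with α = tan(π/n)·coth(a/2), n·∫₀^{π/n} dφ/(α² cos²φ − sin²φ) = (na/2)·tanh(a/2)·cot(π/n). -/

import Mathlib

/-- Centered area of the hyperbolic regular `n`-gon with side length `a`:
with `α = tan(π/n)·coth(a/2)`,
`n ∫₀^{π/n} dφ/(α²cos²φ − sin²φ) = (na/2)·tanh(a/2)·cot(π/n)`. -/
theorem hyperbolic_regular_ngon_centered_area (n : ℕ) (hn : 3 ≤ n) (a α : ℝ)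
    (ha : 0 < a)
    (hα : α = Real.tan (Real.pi / n) / Real.tanh (a / 2))
    (hα1 : Real.tan (Real.pi / n) < α) :
    (n : ℝ) * ∫ φ in (0:ℝ)..(Real.pi / n),
        1 / (α ^ 2 * Real.cos φ ^ 2 - Real.sin φ ^ 2)
      = (n * a / 2) * Real.tanh (a / 2) / Real.tan (Real.pi / n) := by
  have hn' : (3:ℝ) ≤ (n:ℝ) := by exact_mod_cast hn
  set θ : ℝ := Real.pi / n with hθdef
  have hθpos : 0 < θ := div_pos Real.pi_pos (by linarith)
  have hθlt : θ < Real.pi / 2 := by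
    have h3 : θ ≤ Real.pi / 3 := by
      apply div_le_div_of_nonneg_left Real.pi_pos.le (by norm_num) hn'
    nlinarith [Real.pi_pos]
  set t : ℝ := Real.tan θ with htdef
  have ht : 0 < t := Real.tan_pos_of_pos_of_lt_pi_div_two hθpos hθlt
  have hs0 : 0 < Real.sinh (a/2) := Real.sinh_pos_iff.2 (by linarith)
  have hc0 : 0 < Real.cosh (a/2) := Real.cosh_pos _
  have hspos : 0 < Real.tanh (a/2) := by
    rw [Real.tanh_eq_sinh_div_cosh]; positivity
  have hαpos : 0 < α := lt_trans ht hα1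
  -- key facts on the interval
  have hcos : ∀ x ∈ Set.uIcc (0:ℝ) θ, 0 < Real.cos x := by
    intro x hx
    rw [Set.uIcc_of_le hθpos.le] at hx
    exact Real.cos_pos_of_mem_Ioo ⟨by linarith [hx.1, Real.pi_pos], lt_of_le_of_lt hx.2 hθlt⟩
  have htanlt : ∀ x ∈ Set.uIcc (0:ℝ) θ, Real.tan x < α := by
    intro x hx
    rw [Set.uIcc_of_le hθpos.le] at hx
    have : Real.tan x ≤ t := by
      rcases eq_or_lt_of_le hx.2 with h | h
      · rw [h]
      · exact le_of_lt (Real.tan_lt_tan_of_nonneg_of_lt_pi_div_two hx.1 hθlt h)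
    linarith
  have htannn : ∀ x ∈ Set.uIcc (0:ℝ) θ, 0 ≤ Real.tan x := by
    intro x hx
    rw [Set.uIcc_of_le hθpos.le] at hx
    exact Real.tan_nonneg_of_nonneg_of_le_pi_div_two hx.1 (by linarith [hx.2, hθlt])
  have hden : ∀ x ∈ Set.uIcc (0:ℝ) θ, 0 < α ^ 2 * Real.cos x ^ 2 - Real.sin x ^ 2 := by
    intro x hx
    have hc := hcos x hx
    have htl := htanlt x hx
    have htn := htannn x hx
    have h1 : Real.sin x = Real.tan x * Real.cos x := by
      rw [Real.tan_eq_sin_div_cos]; field_simp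
    rw [h1]
    have h2 : Real.tan x ^ 2 < α ^ 2 := by nlinarith
    have h3 := mul_pos (sub_pos.2 h2) (pow_pos hc 2)
    nlinarith [h3]
  -- antiderivative
  have hderiv : ∀ x ∈ Set.uIcc (0:ℝ) θ,
      HasDerivAt (fun φ => (1/(2*α)) * (Real.log (α + Real.tan φ) - Real.log (α - Real.tan φ)))
        (1 / (α ^ 2 * Real.cos x ^ 2 - Real.sin x ^ 2)) x := by
    intro x hx
    have hc := hcos x hx
    have htl := htanlt x hx
    have htn := htannn x hx
    have htan : HasDerivAt Real.tan (1 / Real.cos x ^ 2) x :=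
      Real.hasDerivAt_tan (ne_of_gt hc)
    have hu : HasDerivAt (fun φ => α + Real.tan φ) (1 / Real.cos x ^ 2) x := htan.const_add α
    have hv : HasDerivAt (fun φ => α - Real.tan φ) (-(1 / Real.cos x ^ 2)) x := by
      exact htan.const_sub α
    have hune : α + Real.tan x ≠ 0 := by positivity
    have hvne : α - Real.tan x ≠ 0 := by linarith
    have hlu := hu.log hune
    have hlv := hv.log hvne
    have := ((hlu.sub hlv).const_mul (1/(2*α)))
    refine this.congr_deriv ?_
    have hd := hden x hx
    have h1 : Real.sin x = Real.tan x * Real.cos x := by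
      rw [Real.tan_eq_sin_div_cos]; field_simp
    rw [h1] at hd ⊢
    have hd2 : α ^ 2 * Real.cos x ^ 2 - (Real.tan x * Real.cos x) ^ 2 ≠ 0 := ne_of_gt hd
    have hαne : α ≠ 0 := ne_of_gt hαpos
    have hcne : Real.cos x ≠ 0 := ne_of_gt hc
    have hd3 : α ^ 2 - Real.tan x ^ 2 ≠ 0 := ne_of_gt (by nlinarith)
    field_simp
    ring
  have hint : IntervalIntegrable (fun φ => 1 / (α ^ 2 * Real.cos φ ^ 2 - Real.sin φ ^ 2))
      MeasureTheory.volume 0 θ := by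
    apply ContinuousOn.intervalIntegrable
    apply ContinuousOn.div continuousOn_const
    · fun_prop
    · intro x hx
      exact ne_of_gt (hden x hx)
  have hI := intervalIntegral.integral_eq_sub_of_hasDerivAt hderiv hint
  rw [hI]
  -- evaluate the antiderivative
  have hαval : α = t * Real.cosh (a/2) / Real.sinh (a/2) := by
    rw [hα, Real.tanh_eq_sinh_div_cosh]
    field_simp
  have h1 : α + t = t * Real.exp (a/2) / Real.sinh (a/2) := by
    rw [hαval]
    field_simp
    rw [Real.cosh_add_sinh]
  have h2 : α - t = t * Real.exp (-(a/2)) / Real.sinh (a/2) := by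
    rw [hαval]
    field_simp
    rw [Real.cosh_sub_sinh]
  have hE : Real.exp a * Real.exp (-(a/2)) = Real.exp (a/2) := by
    rw [← Real.exp_add]; ring_nf
  have hexp : α + t = Real.exp a * (α - t) := by
    rw [h1, h2, ← hE]; ring
  have hlog : Real.log (α + t) - Real.log (α - t) = a := by
    rw [hexp, Real.log_mul (Real.exp_ne_zero a) (by nlinarith [Real.exp_pos (-(a/2))]),
      Real.log_exp]
    ring
  simp only [Real.tan_zero, add_zero, sub_zero, sub_self, mul_zero, ← htdef]
  rw [hlog, hα]
  have htne : t ≠ 0 := ne_of_gt ht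
  have hsne : Real.tanh (a/2) ≠ 0 := ne_of_gt hspos
  field_simp
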